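/- For every natural number n ≥ 2 and every m with 2 ≤ m ≤ n, the identity (m-1)·P_{m-1} = Σ_{k=0}^{m-2} P_k · C(n-k, m-k) holds, where P_k is the k-th elementary symmetric function of {1, 2, …, n-1}. -/

import Mathlib

open Polynomial Finset

lemma aux_coeff_sum (n : ℕ) (hn : 2 ≤ n) (m : ℕ) (hm2 : 1 ≤ m) (hmn : m ≤ n) :
    (∑ k ∈ Finset.range n,
      (∑ s ∈ Finset.powersetCard k (Finset.Icc 1 (n - 1)), ∏ a ∈ s, (a : ℤ)) *
        ((n - k).choose (n - m) : ℤ)) =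
    (∑ s ∈ Finset.powersetCard m (Finset.Icc 1 (n - 1)), ∏ a ∈ s, (a : ℤ)) +
      n * ∑ s ∈ Finset.powersetCard (m - 1) (Finset.Icc 1 (n - 1)), ∏ a ∈ s, (a : ℤ) := by
  set S : Finset ℕ := Finset.Icc 1 (n - 1) with hS
  have hcard : S.card = n - 1 := by simp [hS]
  set e : ℕ → ℤ := fun k => ∑ s ∈ S.powersetCard k, ∏ a ∈ s, (a : ℤ) with he
  set f : ℤ[X] := ∏ a ∈ S, (X + C (a : ℤ)) with hf
  -- expansion of f
  have h5 : f = ∑ j ∈ Finset.range n, C (e j) * X ^ (n - 1 - j) := by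
    set M : Multiset ℤ := S.val.map (Nat.cast : ℕ → ℤ) with hM
    have hMc : Multiset.card M = n - 1 := by
      rw [hM, Multiset.card_map]; exact hcard
    have hv := Multiset.prod_X_add_C_eq_sum_esymm M
    rw [hMc] at hv
    have hr : n - 1 + 1 = n := by omega
    rw [hr] at hv
    have hfM : f = (M.map fun r => X + C r).prod := by
      rw [hf, Finset.prod, hM, Multiset.map_map]
      rfl
    rw [hfM, hv]
    refine Finset.sum_congr rfl fun j _ => ?_
    rw [hM, Finset.esymm_map_val]
  -- comp with X+1
  have h6 : f.comp (X + 1) = ∑ j ∈ Finset.range n, C (e j) * (X + 1) ^ (n - 1 - j) := by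
    rw [h5]
    simp [Polynomial.eval₂_finset_sum, Polynomial.mul_comp, Polynomial.pow_comp]
  have h1 : f.comp (X + 1) = ∏ a ∈ S, (X + C ((a : ℤ) + 1)) := by
    rw [hf, Polynomial.prod_comp]
    refine Finset.prod_congr rfl fun a _ => ?_
    simp [Polynomial.add_comp]
    ring
  have h2 : ∏ a ∈ S, (X + C ((a : ℤ) + 1)) = ∏ b ∈ Finset.Icc 2 n, (X + C (b : ℤ)) := by
    have : Finset.Icc 2 n = S.image (· + 1) := by
      rw [hS, Finset.image_add_right_Icc]
      congr 1
      omega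
    rw [this, Finset.prod_image (by intro x _ y _ h; have h' : x + 1 = y + 1 := h; omega)]
    refine Finset.prod_congr rfl fun a _ => ?_
    push_cast
    ring
  have h3 : (X + 1 : ℤ[X]) * ∏ b ∈ Finset.Icc 2 n, (X + C (b : ℤ)) =
      ∏ b ∈ Finset.Icc 1 n, (X + C (b : ℤ)) := by
    have h11 : Finset.Icc 1 n = insert 1 (Finset.Icc 2 n) := by
      ext x; simp [Finset.mem_Icc]; omega
    rw [h11, Finset.prod_insert (by simp)]
    norm_num
  have h4 : ∏ b ∈ Finset.Icc 1 n, (X + C (b : ℤ)) = (X + C (n : ℤ)) * f := by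
    have h12 : Finset.Icc 1 n = insert n (Finset.Icc 1 (n - 1)) := by
      ext x; simp [Finset.mem_Icc]; omega
    rw [h12, Finset.prod_insert (by simp; omega)]
  -- main polynomial identity
  have key : (∑ k ∈ Finset.range n, C (e k) * (X + 1) ^ (n - k)) = (X + C (n : ℤ)) * f := by
    have : (∑ k ∈ Finset.range n, C (e k) * (X + 1) ^ (n - k)) =
        (X + 1) * ∑ j ∈ Finset.range n, C (e j) * (X + 1) ^ (n - 1 - j) := by
      rw [Finset.mul_sum]
      refine Finset.sum_congr rfl fun k hk => ?_
      have hk' : k < n := Finset.mem_range.mp hk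
      have : n - k = (n - 1 - k) + 1 := by omega
      rw [this, pow_succ]
      ring
    rw [this, ← h6, h1, h2, h3, h4]
  -- take coefficient at n - m
  have hco := congrArg (fun p => Polynomial.coeff p (n - m)) key
  rw [Polynomial.finset_sum_coeff] at hco
  have hL : ∀ k ∈ Finset.range n,
      (C (e k) * (X + 1) ^ (n - k)).coeff (n - m) = e k * ((n - k).choose (n - m) : ℤ) := by
    intro k _
    rw [Polynomial.coeff_C_mul, Polynomial.coeff_X_add_one_pow]
  rw [Finset.sum_congr rfl hL] at hco
  -- RHS coefficient
  have hfc1 : f.coeff (n - m) = e (m - 1) := by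
    rw [hf, Finset.prod_X_add_C_coeff _ _ (by omega : n - m ≤ S.card), hcard]
    have : n - 1 - (n - m) = m - 1 := by omega
    rw [this]
  have hR : ((X + C (n : ℤ)) * f).coeff (n - m) = e m + n * e (m - 1) := by
    rcases eq_or_lt_of_le hmn with hmn' | hmn'
    · -- m = n : coeff at 0
      subst hmn'
      have hem : e m = 0 := by
        rw [he]
        have : S.powersetCard m = ∅ := by
          rw [Finset.powersetCard_eq_empty]
          omega
        simp [this]
      rw [Nat.sub_self] at hfc1 ⊢
      rw [hem, zero_add, Polynomial.mul_coeff_zero, hfc1]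
      simp
    · -- m < n
      have hfc2 : f.coeff (n - m - 1) = e m := by
        rw [hf, Finset.prod_X_add_C_coeff _ _ (by omega : n - m - 1 ≤ S.card), hcard]
        have : n - 1 - (n - m - 1) = m := by omega
        rw [this]
      rw [add_mul, Polynomial.coeff_add, Polynomial.coeff_C_mul]
      have hnm : n - m = (n - m - 1) + 1 := by omega
      rw [hnm, Polynomial.coeff_X_mul, ← hnm, hfc1, hfc2]
  rw [hR] at hco
  exact hco

/-- For every `n ≥ 2` and every `m` with `2 ≤ m ≤ n`,
`(m-1)·P_{m-1} = Σ_{k=0}^{m-2} P_k · C(n-k, m-k)`, where `P_k` is the `k`-th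
elementary symmetric function of `{1, 2, …, n-1}`. -/
theorem esymm_recurrence' (n : ℕ) (hn : 2 ≤ n) (m : ℕ) (hm2 : 2 ≤ m) (hmn : m ≤ n) :
    ((m : ℤ) - 1) *
        (∑ s ∈ Finset.powersetCard (m - 1) (Finset.Icc 1 (n - 1)), ∏ a ∈ s, (a : ℤ)) =
      ∑ k ∈ Finset.range (m - 1),
        (∑ s ∈ Finset.powersetCard k (Finset.Icc 1 (n - 1)), ∏ a ∈ s, (a : ℤ)) *
          ((n - k).choose (m - k) : ℤ) := by
  set e : ℕ → ℤ := fun k => ∑ s ∈ (Finset.Icc 1 (n - 1)).powersetCard k, ∏ a ∈ s, (a : ℤ)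
    with he
  have H := aux_coeff_sum n hn m (by omega) hmn
  -- truncate the range-n sum to range (m+1)
  have h1 : (∑ k ∈ Finset.range n, e k * ((n - k).choose (n - m) : ℤ)) =
      ∑ k ∈ Finset.range (m + 1), e k * ((n - k).choose (n - m) : ℤ) := by
    rcases eq_or_lt_of_le hmn with hmn' | hmn'
    · subst hmn'
      rw [Finset.sum_range_succ]
      have hem : e m = 0 := by
        rw [he]
        have : (Finset.Icc 1 (m - 1)).powersetCard m = ∅ := by
          rw [Finset.powersetCard_eq_empty]
          simp
          omega
        simp [this]
      rw [hem]
      ring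
    · refine (Finset.sum_subset (Finset.range_subset_range.mpr (by omega)) fun k hk hk' => ?_).symm
      have hk1 : k < n := Finset.mem_range.mp hk
      have hk2 : m + 1 ≤ k := by
        by_contra h
        exact hk' (Finset.mem_range.mpr (by omega))
      have : (n - k).choose (n - m) = 0 := Nat.choose_eq_zero_of_lt (by omega)
      rw [this]
      ring
  rw [h1, Finset.sum_range_succ] at H
  have hm' : m = (m - 1) + 1 := by omega
  rw [hm', Finset.sum_range_succ, ← hm'] at H
  have ht1 : (n - m).choose (n - m) = 1 := Nat.choose_self _
  have ht2 : (n - (m - 1)).choose (n - m) = n - m + 1 := by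
    have : n - (m - 1) = (n - m) + 1 := by omega
    rw [this, Nat.choose_succ_self_right]
  rw [ht1, ht2] at H
  have hcast : ((n - m + 1 : ℕ) : ℤ) = (n : ℤ) - m + 1 := by
    push_cast [Nat.cast_sub hmn]
    ring
  rw [hcast] at H
  have h2 : ∑ k ∈ Finset.range (m - 1), e k * ((n - k).choose (m - k) : ℤ) =
      ∑ k ∈ Finset.range (m - 1), e k * ((n - k).choose (n - m) : ℤ) := by
    refine Finset.sum_congr rfl fun k hk => ?_
    have hk1 : k < m - 1 := Finset.mem_range.mp hk
    have hsym : (n - k).choose (n - m) = (n - k).choose (m - k) := by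
      have h3 : n - m = (n - k) - (m - k) := by omega
      rw [h3]
      exact Nat.choose_symm (by omega)
    rw [hsym]
  rw [h2]
  simp only [he] at H ⊢
  linear_combination -H
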